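/- Let δ, μ₁, μ₂, β > 0, p > 1, and (w₁, w₂) a positive bounded C² solution on ℝ of w₁'' - δ²w₁ + μ₁w₁^{2p-1} + βw₁^{p-1}w₂^p = 0, w₂'' - δ²w₂ + μ₂w₂^{2p-1} + βw₂^{p-1}w₁^p = 0, whose energy Ψ is a nonnegative constant, and assume w₁, w₂, w₁', w₂' are bounded. Then w₁(t) < λ₁ := (pδ²/μ₁)^{1/(2p-2)} and w₂(t) < λ₂ := (pδ²/μ₂)^{1/(2p-2)} for all t ∈ ℝ. -/

import Mathlib

open Real Set

lemma lam_pow {δ μ p : ℝ} (hδ : 0 < δ) (hμ : 0 < μ) (hp : 1 < p) :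
    ((p * δ^2 / μ) ^ (1/(2*p-2))) ^ (2*p-2) = p * δ^2 / μ := by
  have hA : 0 < p * δ^2 / μ := by positivity
  have h2 : 2*p - 2 ≠ 0 := by nlinarith
  rw [← Real.rpow_mul hA.le, one_div_mul_cancel h2, Real.rpow_one]

lemma lam_pos {δ μ p : ℝ} (hδ : 0 < δ) (hμ : 0 < μ) (hp : 1 < p) :
    0 < (p * δ^2 / μ) ^ (1/(2*p-2)) := by
  have hA : 0 < p * δ^2 / μ := by positivity
  exact Real.rpow_pos_of_pos hA _

lemma rpow_split2 {x p : ℝ} (hx : 0 < x) : x ^ (2*p) = x ^ (2*p-2) * x^2 := by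
  have : x ^ (2*p) = x ^ ((2*p-2) + 2) := by ring_nf
  rw [this, Real.rpow_add hx, Real.rpow_two]

lemma rpow_split1 {x p : ℝ} (hx : 0 < x) : x ^ (2*p-1) = x ^ (2*p-2) * x := by
  have : x ^ (2*p-1) = x ^ ((2*p-2) + 1) := by ring_nf
  rw [this, Real.rpow_add hx, Real.rpow_one]

lemma phi_nonpos {δ μ p x : ℝ} (hδ : 0 < δ) (hμ : 0 < μ) (hp : 1 < p) (hx : 0 < x)
    (hxl : (p * δ^2 / μ) ^ (1/(2*p-2)) ≤ x) :
    δ^2/2 * x^2 - μ/(2*p) * x ^ (2*p) ≤ 0 := by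
  have hl := lam_pos hδ hμ hp (p := p) (δ := δ) (μ := μ)
  have hpe : (0:ℝ) ≤ 2*p-2 := by nlinarith
  have hmono : ((p * δ^2 / μ) ^ (1/(2*p-2))) ^ (2*p-2) ≤ x ^ (2*p-2) :=
    Real.rpow_le_rpow (le_of_lt hl) hxl hpe
  rw [lam_pow hδ hμ hp] at hmono
  rw [rpow_split2 hx]
  have hx2 : (0:ℝ) ≤ x^2 := sq_nonneg x
  have h1 : μ/(2*p) * (p * δ^2 / μ) ≤ μ/(2*p) * x ^ (2*p-2) := by
    apply mul_le_mul_of_nonneg_left hmono; positivity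
  have h2 : μ/(2*p) * (p * δ^2 / μ) = δ^2/2 := by field_simp
  nlinarith [mul_le_mul_of_nonneg_right h1 hx2]

lemma phi_nonneg {δ μ p x : ℝ} (hδ : 0 < δ) (hμ : 0 < μ) (hp : 1 < p) (hx : 0 < x)
    (hxl : x ≤ (p * δ^2 / μ) ^ (1/(2*p-2))) :
    0 ≤ δ^2/2 * x^2 - μ/(2*p) * x ^ (2*p) := by
  have hpe : (0:ℝ) ≤ 2*p-2 := by nlinarith
  have hmono : x ^ (2*p-2) ≤ ((p * δ^2 / μ) ^ (1/(2*p-2))) ^ (2*p-2) :=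
    Real.rpow_le_rpow (le_of_lt hx) hxl hpe
  rw [lam_pow hδ hμ hp] at hmono
  rw [rpow_split2 hx]
  have hx2 : (0:ℝ) ≤ x^2 := sq_nonneg x
  have h1 : μ/(2*p) * x ^ (2*p-2) ≤ μ/(2*p) * (p * δ^2 / μ) := by
    apply mul_le_mul_of_nonneg_left hmono; positivity
  have h2 : μ/(2*p) * (p * δ^2 / μ) = δ^2/2 := by field_simp
  nlinarith [mul_le_mul_of_nonneg_right h1 hx2]

lemma lam_lt_of_phi_neg {δ μ p x : ℝ} (hδ : 0 < δ) (hμ : 0 < μ) (hp : 1 < p) (hx : 0 < x)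
    (h : δ^2/2 * x^2 - μ/(2*p) * x ^ (2*p) < 0) :
    (p * δ^2 / μ) ^ (1/(2*p-2)) < x := by
  by_contra hc
  push_neg at hc
  exact absurd (phi_nonneg hδ hμ hp hx hc) (by linarith)

lemma g_bound {δ μ p x : ℝ} (hδ : 0 < δ) (hμ : 0 < μ) (hp : 1 < p)
    (hxl : (p * δ^2 / μ) ^ (1/(2*p-2)) ≤ x) :
    δ^2 * x - μ * x ^ (2*p-1) ≤ -(δ^2*(p-1) * (p * δ^2 / μ) ^ (1/(2*p-2))) := by
  have hl := lam_pos hδ hμ hp (p := p) (δ := δ) (μ := μ)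
  have hx : 0 < x := lt_of_lt_of_le hl hxl
  have hpe : (0:ℝ) ≤ 2*p-2 := by nlinarith
  have hmono : ((p * δ^2 / μ) ^ (1/(2*p-2))) ^ (2*p-2) ≤ x ^ (2*p-2) :=
    Real.rpow_le_rpow (le_of_lt hl) hxl hpe
  rw [lam_pow hδ hμ hp] at hmono
  rw [rpow_split1 hx]
  have key : δ^2 - μ * x ^ (2*p-2) ≤ δ^2 * (1 - p) := by
    have h1 : μ * (p * δ^2 / μ) ≤ μ * x ^ (2*p-2) :=
      mul_le_mul_of_nonneg_left hmono (le_of_lt hμ)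
    have h2 : μ * (p * δ^2 / μ) = p * δ^2 := by field_simp
    nlinarith
  calc δ^2 * x - μ * (x ^ (2*p-2) * x) = x * (δ^2 - μ * x ^ (2*p-2)) := by ring
    _ ≤ x * (δ^2 * (1-p)) := mul_le_mul_of_nonneg_left key (le_of_lt hx)
    _ ≤ (p * δ^2 / μ) ^ (1/(2*p-2)) * (δ^2 * (1-p)) :=
        mul_le_mul_of_nonpos_right hxl (by nlinarith)
    _ = -(δ^2*(p-1) * (p * δ^2 / μ) ^ (1/(2*p-2))) := by ring

lemma deriv1_contDiff {w : ℝ → ℝ} (hw : ContDiff ℝ 2 w) : ContDiff ℝ 1 (deriv w) := by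
  have h2 : ContDiff ℝ ((1:ℕ)+1) w := by exact_mod_cast hw
  exact_mod_cast ((contDiff_succ_iff_deriv).mp h2).2.2

lemma deriv2_cont {w : ℝ → ℝ} (hw : ContDiff ℝ 2 w) : Continuous (deriv (deriv w)) := by
  have h1 : ContDiff ℝ ((0:ℕ)+1) (deriv w) := by exact_mod_cast deriv1_contDiff hw
  have := ((contDiff_succ_iff_deriv).mp h1).2.2
  exact_mod_cast this.continuous

lemma f_hasDeriv {δ μ p : ℝ} (hp : 1 < p) (w : ℝ → ℝ) (hw : ContDiff ℝ 2 w)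
    (hpos : ∀ t, 0 < w t) (t : ℝ) :
    HasDerivAt (fun t => δ^2/2 * (w t)^2 - μ/(2*p) * w t ^ (2*p) - (deriv w t)^2/2)
      ((δ^2 * w t - μ * w t ^ (2*p-1) - deriv (deriv w) t) * deriv w t) t := by
  have hdw : Differentiable ℝ w := hw.differentiable two_ne_zero
  have hd1 : ContDiff ℝ 1 (deriv w) := deriv1_contDiff hw
  have hw' : HasDerivAt w (deriv w t) t := (hdw t).hasDerivAt
  have hw'' : HasDerivAt (deriv w) (deriv (deriv w) t) t :=
    ((hd1.differentiable one_ne_zero) t).hasDerivAt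
  have h1 := (hw'.pow 2).const_mul (δ^2/2)
  have h2 := (hw'.rpow_const (p := 2*p) (Or.inl (ne_of_gt (hpos t)))).const_mul (μ/(2*p))
  have h3 := (hw''.pow 2).div_const 2
  have := (h1.sub h2).sub h3
  refine this.congr_deriv ?_
  have hp0 : (2:ℝ)*p ≠ 0 := by nlinarith
  have hc : μ / (2*p) * (2*p) = μ := by field_simp
  linear_combination (-(deriv w t * w t ^ (2*p-1))) * hc

/-- Lemma A : impossible that w' < 0 and f < 0 at a point. -/
lemma lemA {δ μ p M : ℝ} (hδ : 0 < δ) (hμ : 0 < μ) (hp : 1 < p) (w h : ℝ → ℝ)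
    (hw : ContDiff ℝ 2 w) (hpos : ∀ t, 0 < w t) (hbd : ∀ t, |deriv w t| ≤ M)
    (hh : ∀ t, 0 ≤ h t)
    (heq : ∀ t, deriv (deriv w) t = δ^2 * w t - μ * w t ^ (2*p-1) - h t)
    (t₁ : ℝ) (hv : deriv w t₁ < 0)
    (hf : δ^2/2 * (w t₁)^2 - μ/(2*p) * w t₁ ^ (2*p) - (deriv w t₁)^2/2 < 0) : False := by
  set lam := (p * δ^2 / μ) ^ (1/(2*p-2)) with hlam
  have hlp : 0 < lam := lam_pos hδ hμ hp
  set f : ℝ → ℝ := fun t => δ^2/2 * (w t)^2 - μ/(2*p) * w t ^ (2*p) - (deriv w t)^2/2 with hfdef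
  have hfe : ∀ t, f t = δ^2/2 * (w t)^2 - μ/(2*p) * w t ^ (2*p) - (deriv w t)^2/2 :=
    fun t => rfl
  have hdw : Differentiable ℝ w := hw.differentiable two_ne_zero
  have hd1 : ContDiff ℝ 1 (deriv w) := deriv1_contDiff hw
  have hcw' : Continuous (deriv w) := hd1.continuous
  have hcw'' : Continuous (deriv (deriv w)) := deriv2_cont hw
  have hcf : Continuous f := by
    apply Continuous.sub
    apply Continuous.sub
    · exact (continuous_const.mul ((hw.continuous.pow 2)))
    · exact continuous_const.mul (hw.continuous.rpow_const (fun t => Or.inl (ne_of_gt (hpos t))))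
    · exact (hcw'.pow 2).div_const 2
  have hfderiv : ∀ t, HasDerivAt f (h t * deriv w t) t := by
    intro t
    have := f_hasDeriv (δ := δ) (μ := μ) hp w hw hpos t
    rw [heq t] at this
    convert this using 1
    ring
  -- Step 1: deriv w t < 0 for all t ≥ t₁
  have step1 : ∀ t, t₁ ≤ t → deriv w t < 0 := by
    by_contra hcon
    push_neg at hcon
    obtain ⟨s, hs1, hs2⟩ := hcon
    have hzero : ∃ c ∈ Icc t₁ s, deriv w c = 0 :=
      intermediate_value_Icc hs1 (hcw'.continuousOn (s := Icc t₁ s)) ⟨le_of_lt hv, hs2⟩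
    set Z := {t | t ∈ Icc t₁ s ∧ deriv w t = 0} with hZ
    have hZne : Z.Nonempty := hzero
    have hZclosed : IsClosed Z :=
      (isClosed_Icc).inter (isClosed_eq hcw' continuous_const)
    have hZbdd : BddBelow Z := ⟨t₁, fun z hz => hz.1.1⟩
    set t₂ := sInf Z with ht₂
    have ht₂mem : t₂ ∈ Z := hZclosed.csInf_mem hZne hZbdd
    have ht₂zero : deriv w t₂ = 0 := ht₂mem.2
    have ht₂ge : t₁ ≤ t₂ := ht₂mem.1.1
    have ht₂gt : t₁ < t₂ := lt_of_le_of_ne ht₂ge (by intro hE; rw [← hE] at ht₂zero; linarith)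
    have hneg : ∀ u, u ∈ Ico t₁ t₂ → deriv w u < 0 := by
      intro u hu
      by_contra hcu
      push_neg at hcu
      obtain ⟨c, hc, hc0⟩ :=
        intermediate_value_Icc hu.1 (hcw'.continuousOn (s := Icc t₁ u)) ⟨le_of_lt hv, hcu⟩
      have hcZ : c ∈ Z := ⟨⟨hc.1, le_trans hc.2 (le_trans (le_of_lt hu.2) ht₂mem.1.2)⟩, hc0⟩
      have h1 : t₂ ≤ u := le_trans (csInf_le hZbdd hcZ) hc.2
      exact absurd hu.2 (not_lt.mpr h1)
    have hanti : AntitoneOn f (Icc t₁ t₂) := by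
      apply antitoneOn_of_deriv_nonpos (convex_Icc t₁ t₂) hcf.continuousOn
      · intro x _; exact (hfderiv x).differentiableAt.differentiableWithinAt
      · intro x hx
        rw [(hfderiv x).deriv]
        rw [interior_Icc] at hx
        exact mul_nonpos_of_nonneg_of_nonpos (hh x) (le_of_lt (hneg x ⟨le_of_lt hx.1, hx.2⟩))
    have hft₂ : f t₂ < 0 := lt_of_le_of_lt
      (hanti (left_mem_Icc.mpr (le_of_lt ht₂gt)) (right_mem_Icc.mpr (le_of_lt ht₂gt))
        (le_of_lt ht₂gt)) hf
    have hwt₂ : lam < w t₂ := by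
      apply lam_lt_of_phi_neg hδ hμ hp (hpos t₂)
      have hE : f t₂ = δ^2/2 * (w t₂)^2 - μ/(2*p) * w t₂ ^ (2*p) - 0^2/2 := by
        rw [hfdef]; simp [ht₂zero]
      rw [hE] at hft₂; simpa using hft₂
    have hw''t₂ : deriv (deriv w) t₂ < 0 := by
      rw [heq t₂]
      have h1 := g_bound hδ hμ hp (x := w t₂) (le_of_lt hwt₂)
      rw [← hlam] at h1
      have h2 := hh t₂
      nlinarith [mul_pos (mul_pos (pow_pos hδ 2) (by linarith : (0:ℝ) < p - 1)) hlp]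
    obtain ⟨ε, hε, hball⟩ := Metric.continuousAt_iff.mp hcw''.continuousAt
      (-(deriv (deriv w) t₂)) (by linarith)
    set t₃ := max t₁ (t₂ - ε/2) with ht₃
    have ht₃lt : t₃ < t₂ := max_lt ht₂gt (by linarith)
    have ht₃ge : t₁ ≤ t₃ := le_max_left _ _
    have hsa : StrictAntiOn (deriv w) (Icc t₃ t₂) := by
      apply strictAntiOn_of_deriv_neg (convex_Icc t₃ t₂) (hcw'.continuousOn)
      intro x hx
      rw [interior_Icc] at hx
      have hdist : dist x t₂ < ε := by
        rw [Real.dist_eq, abs_lt]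
        have h1 : t₂ - ε/2 ≤ t₃ := le_max_right _ _
        constructor <;> [linarith [hx.1, hx.2]; linarith [hx.2]]
      have := hball hdist
      rw [Real.dist_eq, abs_lt] at this
      linarith [this.1, this.2]
    have : 0 < deriv w t₃ := by
      have := hsa (left_mem_Icc.mpr (le_of_lt ht₃lt)) (right_mem_Icc.mpr (le_of_lt ht₃lt)) ht₃lt
      rw [ht₂zero] at this
      linarith
    exact absurd this (not_lt.mpr (le_of_lt (hneg t₃ ⟨ht₃ge, ht₃lt⟩)))
  -- Step 2: f antitone and w antitone on [t₁, ∞)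
  have hfanti : AntitoneOn f (Ici t₁) := by
    apply antitoneOn_of_deriv_nonpos (convex_Ici t₁) hcf.continuousOn
    · intro x _; exact (hfderiv x).differentiableAt.differentiableWithinAt
    · intro x hx
      rw [(hfderiv x).deriv, interior_Ici] at *
      exact mul_nonpos_of_nonneg_of_nonpos (hh x) (le_of_lt (step1 x (le_of_lt hx)))
  have hwanti : AntitoneOn w (Ici t₁) := by
    apply antitoneOn_of_deriv_nonpos (convex_Ici t₁) hw.continuous.continuousOn
    · intro x _; exact (hdw x).differentiableWithinAt
    · intro x hx
      rw [interior_Ici] at hx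
      exact le_of_lt (step1 x (le_of_lt hx))
  have hM0 : 0 ≤ M := le_trans (abs_nonneg _) (hbd t₁)
  by_cases hcase : ∃ t₂, t₁ ≤ t₂ ∧ w t₂ < lam
  · -- case a
    obtain ⟨t₂, ht₂ge, ht₂lt⟩ := hcase
    obtain ⟨a, ha⟩ : ∃ x : ℝ, x = -f t₁ := ⟨_, rfl⟩
    have ha0 : 0 < a := by
      rw [ha, hfe t₁]; linarith [hf]
    obtain ⟨s, hs⟩ : ∃ x : ℝ, x = Real.sqrt (2*a) := ⟨_, rfl⟩
    have hs0 : 0 < s := by rw [hs]; exact Real.sqrt_pos.mpr (by linarith)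
    have hs2 : s^2 = 2*a := by rw [hs]; exact Real.sq_sqrt (by linarith)
    have hkey : ∀ t, t₂ ≤ t → deriv w t ≤ -s := by
      intro t ht
      have htge : t₁ ≤ t := le_trans ht₂ge ht
      have hwle : w t ≤ lam := le_of_lt (lt_of_le_of_lt (hwanti ht₂ge htge ht) ht₂lt)
      have hphi : 0 ≤ δ^2/2 * (w t)^2 - μ/(2*p) * w t ^ (2*p) :=
        phi_nonneg hδ hμ hp (hpos t) hwle
      have hft : f t ≤ -a := by
        have := hfanti (mem_Ici.mpr le_rfl) (mem_Ici.mpr htge) htge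
        rw [hfe t, ha, hfe t₁]
        rw [hfe t, hfe t₁] at this
        linarith [this]
      have hsq : 2*a ≤ (deriv w t)^2 := by
        rw [hfe t] at hft
        linarith [hft, hphi]
      have hneg := step1 t htge
      nlinarith
    have hF : ∀ t, HasDerivAt (fun u => w u + s*u) (deriv w t + s) t := by
      intro t
      exact ((hdw t).hasDerivAt.add ((hasDerivAt_id' t).const_mul s)).congr_deriv (by ring)
    have hFanti : AntitoneOn (fun u => w u + s*u) (Ici t₂) := by
      apply antitoneOn_of_deriv_nonpos (convex_Ici t₂)
        ((hw.continuous.add (continuous_const.mul continuous_id')).continuousOn)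
      · intro x _; exact (hF x).differentiableAt.differentiableWithinAt
      · intro x hx
        change deriv (fun u => w u + s*u) x ≤ 0
        rw [(hF x).deriv, interior_Ici] at *
        linarith [hkey x (le_of_lt hx)]
    obtain ⟨T, hT⟩ : ∃ x : ℝ, x = t₂ + (w t₂ + 1)/s := ⟨_, rfl⟩
    have hTge : t₂ ≤ T := by
      rw [hT]
      have : 0 < (w t₂ + 1)/s := div_pos (by linarith [hpos t₂]) hs0
      linarith
    have hle : w T + s * T ≤ w t₂ + s * t₂ :=
      hFanti (mem_Ici.mpr le_rfl) (mem_Ici.mpr hTge) hTge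
    have hE : s * T = s * t₂ + (w t₂ + 1) := by rw [hT]; field_simp
    linarith [hpos T, hle, hE]
  · -- case b
    push_neg at hcase
    obtain ⟨η, hη⟩ : ∃ x : ℝ, x = δ^2*(p-1)*lam := ⟨_, rfl⟩
    have hη0 : 0 < η := by
      rw [hη]
      exact mul_pos (mul_pos (pow_pos hδ 2) (by linarith)) hlp
    have hw'' : ∀ t, t₁ ≤ t → deriv (deriv w) t ≤ -η := by
      intro t ht
      rw [heq t]
      have h1 := g_bound hδ hμ hp (x := w t) (hcase t ht)
      rw [← hlam] at h1
      have h2 := hh t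
      rw [hη]
      linarith
    have hG : ∀ t, HasDerivAt (fun u => deriv w u + η*u) (deriv (deriv w) t + η) t := by
      intro t
      exact (((hd1.differentiable one_ne_zero t).hasDerivAt).add ((hasDerivAt_id' t).const_mul η)).congr_deriv (by ring)
    have hGanti : AntitoneOn (fun u => deriv w u + η*u) (Ici t₁) := by
      apply antitoneOn_of_deriv_nonpos (convex_Ici t₁)
        ((hcw'.add (continuous_const.mul continuous_id')).continuousOn)
      · intro x _; exact (hG x).differentiableAt.differentiableWithinAt
      · intro x hx
        change deriv (fun u => deriv w u + η*u) x ≤ 0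
        rw [(hG x).deriv, interior_Ici] at *
        linarith [hw'' x (le_of_lt hx)]
    obtain ⟨T, hT⟩ : ∃ x : ℝ, x = t₁ + (2*M+1)/η := ⟨_, rfl⟩
    have hTge : t₁ ≤ T := by
      rw [hT]
      have : 0 < (2*M+1)/η := div_pos (by linarith) hη0
      linarith
    have hGle : deriv w T + η * T ≤ deriv w t₁ + η * t₁ :=
      hGanti (mem_Ici.mpr le_rfl) (mem_Ici.mpr hTge) hTge
    have hE : η * T = η * t₁ + (2*M+1) := by rw [hT]; field_simp
    have h2 := abs_le.mp (hbd T)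
    have h3 := abs_le.mp (hbd t₁)
    linarith [hGle, hE, h2.1, h3.2]

/-- Lemma B : impossible that w t₀ ≥ λ. -/
lemma lemB {δ μ p M : ℝ} (hδ : 0 < δ) (hμ : 0 < μ) (hp : 1 < p) (w h : ℝ → ℝ)
    (hw : ContDiff ℝ 2 w) (hpos : ∀ t, 0 < w t) (hbd : ∀ t, |deriv w t| ≤ M)
    (hh : ∀ t, 0 < h t)
    (heq : ∀ t, deriv (deriv w) t = δ^2 * w t - μ * w t ^ (2*p-1) - h t)
    (t₀ : ℝ) (hge : (p * δ^2 / μ) ^ (1/(2*p-2)) ≤ w t₀) : False := by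
  have hh' : ∀ t, 0 ≤ h t := fun t => (hh t).le
  have hdw : Differentiable ℝ w := hw.differentiable two_ne_zero
  have hd1 : ContDiff ℝ 1 (deriv w) := deriv1_contDiff hw
  have hcw' : Continuous (deriv w) := hd1.continuous
  have hcw'' : Continuous (deriv (deriv w)) := deriv2_cont hw
  have hphi := phi_nonpos hδ hμ hp (hpos t₀) hge
  rcases lt_trichotomy (deriv w t₀) 0 with hneg | hzero | hpos'
  · exact lemA hδ hμ hp w h hw hpos hbd hh' heq t₀ hneg
      (by nlinarith [hphi, mul_pos_of_neg_of_neg hneg hneg])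
  · -- derivative zero at t₀
    have hw''0 : deriv (deriv w) t₀ < 0 := by
      rw [heq t₀]
      have hgb := g_bound hδ hμ hp hge
      have hht := hh t₀
      nlinarith [mul_pos (mul_pos (pow_pos hδ 2) (sub_pos.mpr hp)) (lam_pos hδ hμ hp)]
    obtain ⟨ε, hε, hball⟩ := Metric.continuousAt_iff.mp hcw''.continuousAt
      (-(deriv (deriv w) t₀)) (by linarith)
    obtain ⟨t₁, ht₁⟩ : ∃ x : ℝ, x = t₀ + ε/2 := ⟨_, rfl⟩
    have ht₀lt : t₀ < t₁ := by rw [ht₁]; linarith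
    have hw''neg : ∀ x, x ∈ Icc t₀ t₁ → deriv (deriv w) x < 0 := by
      intro x hx
      have hdist : dist x t₀ < ε := by
        rw [Real.dist_eq, abs_lt]
        rw [ht₁] at hx
        constructor <;> [linarith [hx.1]; linarith [hx.2]]
      have := hball hdist
      rw [Real.dist_eq, abs_lt] at this
      linarith [this.1, this.2]
    have hsa : StrictAntiOn (deriv w) (Icc t₀ t₁) := by
      apply strictAntiOn_of_deriv_neg (convex_Icc t₀ t₁) (hcw'.continuousOn)
      intro x hx
      rw [interior_Icc] at hx
      exact hw''neg x ⟨le_of_lt hx.1, le_of_lt hx.2⟩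
    have hv1 : deriv w t₁ < 0 := by
      have := hsa (left_mem_Icc.mpr (le_of_lt ht₀lt)) (right_mem_Icc.mpr (le_of_lt ht₀lt)) ht₀lt
      rw [hzero] at this; exact this
    set f : ℝ → ℝ := fun t => δ^2/2 * (w t)^2 - μ/(2*p) * w t ^ (2*p) - (deriv w t)^2/2
      with hfdef
    have hfe : ∀ t, f t = δ^2/2 * (w t)^2 - μ/(2*p) * w t ^ (2*p) - (deriv w t)^2/2 :=
      fun t => rfl
    have hcf : Continuous f := by
      apply Continuous.sub
      apply Continuous.sub
      · exact (continuous_const.mul ((hw.continuous.pow 2)))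
      · exact continuous_const.mul (hw.continuous.rpow_const (fun t => Or.inl (ne_of_gt (hpos t))))
      · exact (hcw'.pow 2).div_const 2
    have hfderiv : ∀ t, HasDerivAt f (h t * deriv w t) t := by
      intro t
      have := f_hasDeriv (δ := δ) (μ := μ) hp w hw hpos t
      rw [heq t] at this
      convert this using 1
      ring
    have hfsa : StrictAntiOn f (Icc t₀ t₁) := by
      apply strictAntiOn_of_deriv_neg (convex_Icc t₀ t₁) (hcf.continuousOn)
      intro x hx
      rw [(hfderiv x).deriv]
      rw [interior_Icc] at hx
      have hdwx : deriv w x < 0 := by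
        have := hsa (left_mem_Icc.mpr (le_of_lt ht₀lt)) ⟨le_of_lt hx.1, le_of_lt hx.2⟩ hx.1
        rw [hzero] at this; exact this
      exact mul_neg_of_pos_of_neg (hh x) hdwx
    have hft₁ : f t₁ < 0 := by
      have h1 := hfsa (left_mem_Icc.mpr (le_of_lt ht₀lt)) (right_mem_Icc.mpr (le_of_lt ht₀lt)) ht₀lt
      have h2 : f t₀ ≤ 0 := by rw [hfe t₀, hzero]; simpa using hphi
      linarith
    exact lemA hδ hμ hp w h hw hpos hbd hh' heq t₁ hv1 (by rw [← hfe t₁]; exact hft₁)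
  · -- derivative positive: reflect time
    have hder1 : ∀ t, HasDerivAt (fun u => w (-u)) (-(deriv w (-t))) t := by
      intro t
      have := HasDerivAt.comp t ((hdw (-t)).hasDerivAt) (hasDerivAt_neg t)
      exact this.congr_deriv (by ring)
    have hder1' : deriv (fun u => w (-u)) = fun t => -(deriv w (-t)) :=
      funext fun t => (hder1 t).deriv
    have hder2 : ∀ t, deriv (deriv (fun u => w (-u))) t = deriv (deriv w) (-t) := by
      intro t
      rw [hder1']
      have h2 : HasDerivAt (fun u => -(deriv w (-u))) (deriv (deriv w) (-t)) t := by
        have := HasDerivAt.comp t ((hd1.differentiable one_ne_zero (-t)).hasDerivAt) (hasDerivAt_neg t)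
        exact this.neg.congr_deriv (by ring)
      exact h2.deriv
    have hwn : ContDiff ℝ 2 (fun u => w (-u)) := hw.comp contDiff_neg
    have hbdn : ∀ t, |deriv (fun u => w (-u)) t| ≤ M := by
      intro t; rw [hder1']; simpa using hbd (-t)
    have heqn : ∀ t, deriv (deriv (fun u => w (-u))) t
        = δ^2 * w (-t) - μ * w (-t) ^ (2*p-1) - h (-t) := by
      intro t; rw [hder2 t, heq (-t)]
    refine lemA hδ hμ hp (fun u => w (-u)) (fun u => h (-u)) hwn (fun t => hpos (-t)) hbdn
      (fun t => hh' (-t)) heqn (-t₀) ?_ ?_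
    · rw [hder1']; simpa using hpos'
    · rw [hder1']
      simp only [neg_neg]
      have hd2 : 0 < deriv w t₀ * deriv w t₀ := mul_pos hpos' hpos'
      nlinarith [hphi]

theorem stmt_3 (δ μ₁ μ₂ β p K : ℝ) (hδ : 0 < δ) (hμ₁ : 0 < μ₁) (hμ₂ : 0 < μ₂)
    (hβ : 0 < β) (hp : 1 < p) (hK : 0 ≤ K) (w₁ w₂ : ℝ → ℝ)
    (hw₁ : ContDiff ℝ 2 w₁) (hw₂ : ContDiff ℝ 2 w₂)
    (hpos₁ : ∀ t, 0 < w₁ t) (hpos₂ : ∀ t, 0 < w₂ t)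
    (hbd : ∃ M, ∀ t, w₁ t ≤ M ∧ w₂ t ≤ M ∧ |deriv w₁ t| ≤ M ∧ |deriv w₂ t| ≤ M)
    (heq₁ : ∀ t, deriv (deriv w₁) t - δ^2 * w₁ t + μ₁ * w₁ t ^ (2*p - 1)
      + β * w₁ t ^ (p - 1) * w₂ t ^ p = 0)
    (heq₂ : ∀ t, deriv (deriv w₂) t - δ^2 * w₂ t + μ₂ * w₂ t ^ (2*p - 1)
      + β * w₂ t ^ (p - 1) * w₁ t ^ p = 0)
    (hΨ : ∀ t, (1/2) * ((deriv w₁ t)^2 + (deriv w₂ t)^2 - δ^2 * (w₁ t)^2 - δ^2 * (w₂ t)^2)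
      + (1/(2*p)) * (μ₁ * w₁ t ^ (2*p) + 2*β * w₁ t ^ p * w₂ t ^ p + μ₂ * w₂ t ^ (2*p)) = K) :
    ∀ t : ℝ, w₁ t < (p * δ^2 / μ₁) ^ (1/(2*p - 2)) ∧ w₂ t < (p * δ^2 / μ₂) ^ (1/(2*p - 2)) := by
  obtain ⟨M, hM⟩ := hbd
  intro t
  constructor
  · by_contra hc
    push_neg at hc
    exact lemB hδ hμ₁ hp w₁ (fun u => β * w₁ u ^ (p-1) * w₂ u ^ p) hw₁ hpos₁
      (fun u => (hM u).2.2.1)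
      (fun u => mul_pos (mul_pos hβ (Real.rpow_pos_of_pos (hpos₁ u) _))
        (Real.rpow_pos_of_pos (hpos₂ u) _))
      (fun u => show deriv (deriv w₁) u
        = δ^2 * w₁ u - μ₁ * w₁ u ^ (2*p-1) - (β * w₁ u ^ (p-1) * w₂ u ^ p) by
          linarith [heq₁ u]) t hc
  · by_contra hc
    push_neg at hc
    exact lemB hδ hμ₂ hp w₂ (fun u => β * w₂ u ^ (p-1) * w₁ u ^ p) hw₂ hpos₂
      (fun u => (hM u).2.2.2)
      (fun u => mul_pos (mul_pos hβ (Real.rpow_pos_of_pos (hpos₂ u) _))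
        (Real.rpow_pos_of_pos (hpos₁ u) _))
      (fun u => show deriv (deriv w₂) u
        = δ^2 * w₂ u - μ₂ * w₂ u ^ (2*p-1) - (β * w₂ u ^ (p-1) * w₁ u ^ p) by
          linarith [heq₂ u]) t hc
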